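/- The preimage of the real segment [−1,1] under the Chebyshev polynomial T_n (normalized so that T_n(cos θ) = cos(nθ)) is again the segment [−1,1], viewed as a subset of ℂ. -/
import Mathlib

open Complex

/-- If `cos w` is a real number in `[-1, 1]`, then `w` is real. -/
lemma cos_mem_Icc_im_eq_zero {w : ℂ} {x : ℝ} (hx : x ∈ Set.Icc (-1:ℝ) 1)
    (h : Complex.cos w = (x : ℂ)) : w.im = 0 := by
  have hw : w = (w.re : ℂ) + (w.im : ℂ) * I := (Complex.re_add_im w).symm
  have hcos : Complex.cos w =
      ((Real.cos w.re * Real.cosh w.im : ℝ) : ℂ) - ((Real.sin w.re * Real.sinh w.im : ℝ) : ℂ) * I := by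
    conv_lhs => rw [hw, Complex.cos_add, Complex.cos_mul_I, Complex.sin_mul_I]
    rw [← Complex.ofReal_cos, ← Complex.ofReal_sin, ← Complex.ofReal_cosh,
      ← Complex.ofReal_sinh, Complex.ofReal_mul, Complex.ofReal_mul]
    ring
  rw [hcos] at h
  have him : Real.sin w.re * Real.sinh w.im = 0 := by
    have := congrArg Complex.im h
    simp only [Complex.sub_im, Complex.mul_im, Complex.ofReal_im, Complex.ofReal_re,
      Complex.I_im, Complex.I_re, mul_one, mul_zero, zero_sub, add_zero, zero_mul] at this
    linarith
  have hre : Real.cos w.re * Real.cosh w.im = x := by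
    have := congrArg Complex.re h
    simp only [Complex.sub_re, Complex.mul_re, Complex.ofReal_re, Complex.ofReal_im,
      Complex.I_re, Complex.I_im, mul_zero, mul_one, zero_mul, sub_zero, zero_sub] at this
    linarith
  rcases mul_eq_zero.mp him with hs | hs
  · -- sin w.re = 0, so |cos w.re| = 1 and |x| = cosh w.im ≤ 1
    have hc : |Real.cos w.re| = 1 := by
      have h1 : Real.sin w.re ^ 2 + Real.cos w.re ^ 2 = 1 := Real.sin_sq_add_cos_sq w.re
      rw [hs] at h1
      nlinarith [abs_nonneg (Real.cos w.re), _root_.sq_abs (Real.cos w.re)]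
    have hcosh : Real.cosh w.im ≤ 1 := by
      have habs : |x| ≤ 1 := abs_le.mpr ⟨hx.1, hx.2⟩
      have habs2 : |Real.cos w.re * Real.cosh w.im| = Real.cosh w.im := by
        rw [abs_mul, hc, one_mul, abs_of_pos (Real.cosh_pos _)]
      rw [hre] at habs2
      linarith [habs2 ▸ habs]
    by_contra h0
    exact absurd hcosh (not_le.mpr (Real.one_lt_cosh.mpr h0))
  · exact Real.sinh_eq_zero.mp hs

theorem stmt_3 (n : ℕ) (hn : 1 ≤ n) :
    (Polynomial.Chebyshev.T ℂ n).eval ⁻¹' (Complex.ofReal '' Set.Icc (-1) 1) =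
      Complex.ofReal '' Set.Icc (-1) 1 := by
  ext z
  constructor
  · rintro ⟨x, hx, hxz⟩
    obtain ⟨u, rfl⟩ := Complex.cos_surjective z
    have hxz0 : Complex.cos (((n : ℤ) : ℂ) * u) = (x : ℂ) := by
      rw [← Polynomial.Chebyshev.T_complex_cos u (n : ℤ)]
      exact hxz.symm
    have hxz' : Complex.cos ((n : ℂ) * u) = (x : ℂ) := by
      push_cast at hxz0 ⊢
      exact hxz0
    have him : ((n : ℂ) * u).im = 0 := cos_mem_Icc_im_eq_zero hx hxz'
    have hn0 : (n : ℝ) ≠ 0 := by positivity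
    have huim : u.im = 0 := by
      have h2 : (n : ℝ) * u.im = 0 := by
        simpa [Complex.mul_im] using him
      exact (mul_eq_zero.mp h2).resolve_left hn0
    have hu : u = ((u.re : ℝ) : ℂ) := Complex.ext rfl huim
    refine ⟨Real.cos u.re, ⟨Real.neg_one_le_cos _, Real.cos_le_one _⟩, ?_⟩
    conv_rhs => rw [hu]
    exact Complex.ofReal_cos u.re
  · rintro ⟨x, hx, rfl⟩
    simp only [Set.mem_preimage]
    have key : (Polynomial.Chebyshev.T ℂ (n : ℤ)).eval (x : ℂ) =
        ((Real.cos ((n : ℝ) * Real.arccos x) : ℝ) : ℂ) := by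
      conv_lhs => rw [show (x : ℂ) = Complex.cos ((Real.arccos x : ℝ) : ℂ) by
        rw [← Complex.ofReal_cos, Real.cos_arccos hx.1 hx.2]]
      rw [Polynomial.Chebyshev.T_complex_cos]
      norm_cast
    rw [key]
    exact ⟨_, ⟨Real.neg_one_le_cos _, Real.cos_le_one _⟩, rfl⟩
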